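/- Let n ≥ 2 and k ≥ l ≥ 1, and let b_1 ∈ B_{(k)}, b_2 ∈ B_{(l)}. In the two-column diagram of b_1 ⊗ b_2, the set of left-column dots that become endpoints of H-lines under the pairing procedure — and hence the resulting element ι(b_1 ⊗ b_2) ∈ B_{(l)} ⊗ B_{(k)} — is the same for every order in which the right-column dots are processed. -/

import Mathlib

open scoped BigOperators Classical

namespace HKKOTY

/-! ### q-binomial coefficients -/

/-- Gaussian binomial coefficient `[m; k]_q`, via the q-Pascal recurrence. -/
def qbin {R : Type*} [CommRing R] (q : R) : ℕ → ℕ → R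
  | _, 0 => 1
  | 0, _ + 1 => 0
  | m + 1, k + 1 => qbin q m k + q ^ (k + 1) * qbin q m (k + 1)

/-- `[m; k]_q` for integer arguments, zero unless `0 ≤ k ≤ m`. -/
def qbinZ {R : Type*} [CommRing R] (q : R) (m k : ℤ) : R :=
  if 0 ≤ m ∧ 0 ≤ k then qbin q m.toNat k.toNat else 0

/-- `[m; k]_q` for rational arguments, zero unless both are integers with `0 ≤ k ≤ m`. -/
def qbinQ {R : Type*} [CommRing R] (q : R) (m k : ℚ) : R :=
  if m.den = 1 ∧ k.den = 1 then qbinZ q m.num k.num else 0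

/-! ### Partitions as sorted lists of positive integers -/

/-- A partition, encoded as a weakly decreasing list of positive integers. -/
def IsPtn (μ : List ℕ) : Prop :=
  List.Pairwise (· ≥ ·) μ ∧ ∀ x ∈ μ, 0 < x

/-- `conjL μ i` is the `(i+1)`-st part `μ'_{i+1}` of the conjugate partition. -/
def conjL (μ : List ℕ) (i : ℕ) : ℕ := (μ.filter (fun x => i + 1 ≤ x)).length

/-- The conjugate partition, as a list. -/
def conjList (μ : List ℕ) : List ℕ := (List.range (μ.getD 0 0)).map (fun i => conjL μ i)

/-- Content composition attached to a partition `μ`: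
the letter `k ≥ 1` occurs `μ_k` times. -/
def toC (μ : List ℕ) : ℕ → ℕ := fun k => μ.getD (k - 1) 0

/-- Partwise sum of two partitions (padding with zeros). -/
def addL (α β : List ℕ) : List ℕ :=
  (List.range (max α.length β.length)).map (fun i => α.getD i 0 + β.getD i 0)

end HKKOTY


open scoped BigOperators Classical

namespace HKKOTY

/-! ### Crystals `B_{(l)}`, the combinatorial R-matrix and energy functions -/

/-- An element of the crystal `B_{(l)}` of the `l`-th symmetric power for `sl_n`:
a function recording the number of dots in each row `1, …, n`, vanishing elsewhere. -/
def isCrys (n l : ℕ) (b : ℕ → ℕ) : Prop :=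
  (∀ j, (j = 0 ∨ n < j) → b j = 0) ∧ (∑ j ∈ Finset.range n, b (j + 1)) = l

/-- An element of the crystal `B_{(1^l)}` (antisymmetric tensors): at most one dot per row. -/
def isCrysA (n l : ℕ) (b : ℕ → ℕ) : Prop :=
  isCrys n l b ∧ ∀ j, b j ≤ 1

/-- H-line rule for symmetric tensors: given available left-column dot counts `L` and
a right dot in row `a`, its partner is a left dot in the lowest available row strictly above
(`unwinding`, flag `false`), else a left dot in the lowest available row (`winding`, `true`). -/
def stepH (n : ℕ) (L : ℕ → ℕ) (a : ℕ) : Option (ℕ × Bool) :=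
  match ((List.range a).filter (fun r => 1 ≤ r ∧ L r ≠ 0)).max? with
  | some r => some (r, false)
  | none =>
    match ((List.range (n + 1)).filter (fun r => 1 ≤ r ∧ L r ≠ 0)).max? with
    | some r => some (r, true)
    | none => none

/-- H-line rule for antisymmetric tensors: the partner is the highest available left dot
not higher than row `a` (`unwinding`), else the highest available left dot (`winding`). -/
def stepA (n : ℕ) (L : ℕ → ℕ) (a : ℕ) : Option (ℕ × Bool) :=
  match (((List.range (n + 1)).filter (fun r => a ≤ r ∧ 1 ≤ r ∧ L r ≠ 0)).min?) with
  | some r => some (r, false)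
  | none =>
    match (((List.range (n + 1)).filter (fun r => 1 ≤ r ∧ L r ≠ 0)).min?) with
    | some r => some (r, true)
    | none => none

/-- Run the pairing procedure on the right-column dots listed (by rows) in `o`;
returns the remaining (unpaired) left-column dot counts and the number of winding pairs. -/
def runGen (step : (ℕ → ℕ) → ℕ → Option (ℕ × Bool)) : (ℕ → ℕ) → List ℕ → ((ℕ → ℕ) × ℕ)
  | L, [] => (L, 0)
  | L, a :: rest =>
    match step L a with
    | some (r, wind) =>
      let res := runGen step (Function.update L r (L r - 1)) rest
      (res.1, res.2 + if wind then 1 else 0)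
    | none => runGen step L rest

/-- The canonical processing order of the dots of `b`: rows from top to bottom. -/
def rOrder (n : ℕ) (b : ℕ → ℕ) : List ℕ :=
  (List.range n).flatMap (fun i => List.replicate (b (i + 1)) (i + 1))

/-- Combinatorial R-matrix and energy for symmetric tensors:
`iotaPair n b1 b2 = (b2', b1', H)` where `ι(b1 ⊗ b2) = b2' ⊗ b1'` and `H = H(b1 ⊗ b2)`. -/
def iotaPair (n : ℕ) (b1 b2 : ℕ → ℕ) : ((ℕ → ℕ) × (ℕ → ℕ) × ℕ) :=
  let res := runGen (stepH n) b1 (rOrder n b2)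
  (fun r => b1 r - res.1 r, fun r => b2 r + res.1 r, res.2)

/-- Same for antisymmetric tensors; the third component is the number of winding pairs,
i.e. `-H(b1 ⊗ b2)`. -/
def iotaPairA (n : ℕ) (b1 b2 : ℕ → ℕ) : ((ℕ → ℕ) × (ℕ → ℕ) × ℕ) :=
  let res := runGen (stepA n) b1 (rOrder n b2)
  (fun r => b1 r - res.1 r, fun r => b2 r + res.1 r, res.2)

/-- `passLeft n [b_i, …, b_{j-1}] b_j = b_j^{(i)}`: move `b_j` leftwards through the listed
factors using the isomorphism `ι`. -/
def passLeft (n : ℕ) (cs : List (ℕ → ℕ)) (b : ℕ → ℕ) : ℕ → ℕ :=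
  cs.foldr (fun c acc => (iotaPair n c acc).1) b

def passLeftA (n : ℕ) (cs : List (ℕ → ℕ)) (b : ℕ → ℕ) : ℕ → ℕ :=
  cs.foldr (fun c acc => (iotaPairA n c acc).1) b

/-- The energy `E(p) = ∑_{i<j} H(b_i ⊗ b_j^{(i+1)})` of a path (symmetric tensors). -/
def energy (n : ℕ) (p : List (ℕ → ℕ)) : ℕ :=
  ∑ j ∈ Finset.range p.length, ∑ i ∈ Finset.range j,
    (iotaPair n (p.getD i (fun _ => 0))
      (passLeft n ((p.drop (i + 1)).take (j - i - 1)) (p.getD j (fun _ => 0)))).2.2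

/-- Minus the energy, `-E(p) = ∑_{i<j} (-H)(b_i ⊗ b_j^{(i+1)})`, of a path of
antisymmetric tensors (each `H` being minus the number of winding pairs). -/
def energyA (n : ℕ) (p : List (ℕ → ℕ)) : ℕ :=
  ∑ j ∈ Finset.range p.length, ∑ i ∈ Finset.range j,
    (iotaPairA n (p.getD i (fun _ => 0))
      (passLeftA n ((p.drop (i + 1)).take (j - i - 1)) (p.getD j (fun _ => 0)))).2.2

/-- A path in `B_{(μ_1)} ⊗ ⋯ ⊗ B_{(μ_m)}`. -/
def IsPath (n : ℕ) (μ : List ℕ) (p : List (ℕ → ℕ)) : Prop :=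
  p.length = μ.length ∧ ∀ j < μ.length, isCrys n (μ.getD j 0) (p.getD j (fun _ => 0))

/-- A path in `B_{(1^{μ_1})} ⊗ ⋯ ⊗ B_{(1^{μ_m})}`. -/
def IsPathA (n : ℕ) (μ : List ℕ) (p : List (ℕ → ℕ)) : Prop :=
  p.length = μ.length ∧ ∀ j < μ.length, isCrysA n (μ.getD j 0) (p.getD j (fun _ => 0))

/-- The path `p` has content `lam`: the letter `i` occurs `lam i` times in total. -/
def PathContent (n : ℕ) (p : List (ℕ → ℕ)) (lam : ℕ → ℕ) : Prop :=
  ∀ i, 1 ≤ i → i ≤ n → (∑ j ∈ Finset.range p.length, p.getD j (fun _ => 0) i) = lam i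

/-- The ground state path associated with the partition `μ`: the `(j+1)`-st factor
(0-indexed `j`) has all its dots in the row `≡ j+1 (mod n)`. -/
def gspath (n : ℕ) (μ : List ℕ) : List (ℕ → ℕ) :=
  (List.range μ.length).map (fun j => fun x => if x = (j % n) + 1 then μ.getD j 0 else 0)

/-! ### Kashiwara operators -/

/-- Row from which `ẽ_i` removes a dot. -/
def srcI (n i : ℕ) : ℕ := if i = 0 then 1 else i + 1

/-- Row to which `ẽ_i` adds a dot. -/
def dstI (n i : ℕ) : ℕ := if i = 0 then n else i

/-- `ε_i(b)` on `B_{(l)}`. -/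
def epsB (n i : ℕ) (b : ℕ → ℕ) : ℕ := b (srcI n i)

/-- `φ_i(b)` on `B_{(l)}`. -/
def phiB (n i : ℕ) (b : ℕ → ℕ) : ℕ := b (dstI n i)

/-- The Kashiwara operator `ẽ_i` on `B_{(l)}` (`none` encodes `0`). -/
def etB (n i : ℕ) (b : ℕ → ℕ) : Option (ℕ → ℕ) :=
  if b (srcI n i) = 0 then none
  else some (fun x => if x = srcI n i then b x - 1
             else if x = dstI n i then b x + 1 else b x)

/-- `(ε_i, φ_i)` of a tensor product of crystal elements. -/
def ephiL (n i : ℕ) : List (ℕ → ℕ) → ℤ × ℤ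
  | [] => (0, 0)
  | b :: rest =>
    let ec := (ephiL n i rest).1
    let pc := (ephiL n i rest).2
    let eb : ℤ := epsB n i b
    let pb : ℤ := phiB n i b
    (max eb (eb + ec - pb), max pc (pb + pc - ec))

/-- The Kashiwara operator `ẽ_i` on a tensor product:
`ẽ_i(b ⊗ c) = (ẽ_i b) ⊗ c` if `φ_i(b) ≥ ε_i(c)`, else `b ⊗ (ẽ_i c)`. -/
def etL (n i : ℕ) : List (ℕ → ℕ) → Option (List (ℕ → ℕ))
  | [] => none
  | b :: rest =>
    if (ephiL n i rest).1 ≤ (phiB n i b : ℤ) then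
      (etB n i b).map (· :: rest)
    else
      (etL n i rest).map (b :: ·)

end HKKOTY


namespace HKKOTY

open Finset

/-! ### Auxiliary lemmas for order-independence -/

/-- The list of available left rows below `m` (exclusive). -/
private def fl (L : ℕ → ℕ) (m : ℕ) : List ℕ :=
  (List.range m).filter (fun s => 1 ≤ s ∧ L s ≠ 0)

private lemma stepH_def (n : ℕ) (L : ℕ → ℕ) (a : ℕ) :
    stepH n L a =
      match (fl L a).max? with
      | some r => some (r, false)
      | none =>
        match (fl L (n + 1)).max? with
        | some r => some (r, true)
        | none => none := rfl

private lemma fl_max_some {L : ℕ → ℕ} {m r : ℕ} :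
    (fl L m).max? = some r ↔
      (r < m ∧ 1 ≤ r ∧ L r ≠ 0) ∧ ∀ s, s < m → 1 ≤ s → L s ≠ 0 → s ≤ r := by
  rw [List.max?_eq_some_iff]
  simp only [fl, List.mem_filter, List.mem_range, decide_eq_true_eq]
  constructor
  · rintro ⟨⟨h1, h2, h3⟩, h4⟩
    exact ⟨⟨h1, h2, h3⟩, fun s hs h1s h2s => h4 s ⟨hs, h1s, h2s⟩⟩
  · rintro ⟨⟨h1, h2, h3⟩, h4⟩
    exact ⟨⟨h1, h2, h3⟩, fun s ⟨hs, h1s, h2s⟩ => h4 s hs h1s h2s⟩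

private lemma fl_max_none {L : ℕ → ℕ} {m : ℕ} :
    (fl L m).max? = none ↔ ∀ s, s < m → 1 ≤ s → L s = 0 := by
  rw [List.max?_eq_none_iff, List.eq_nil_iff_forall_not_mem]
  simp only [fl, List.mem_filter, List.mem_range, decide_eq_true_eq]
  constructor
  · intro h s hs h1s
    by_contra hL
    exact h s ⟨hs, h1s, hL⟩
  · rintro h s ⟨hs, h1s, hL⟩
    exact hL (h s hs h1s)

private lemma stepH_some_false {n : ℕ} {L : ℕ → ℕ} {a r : ℕ} :
    stepH n L a = some (r, false) ↔ (fl L a).max? = some r := by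
  rw [stepH_def]
  rcases h1 : (fl L a).max? with _ | r1
  · rcases h2 : (fl L (n + 1)).max? with _ | r2 <;> simp
  · simp

private lemma stepH_some_true {n : ℕ} {L : ℕ → ℕ} {a r : ℕ} :
    stepH n L a = some (r, true) ↔
      (fl L a).max? = none ∧ (fl L (n + 1)).max? = some r := by
  rw [stepH_def]
  rcases h1 : (fl L a).max? with _ | r1
  · rcases h2 : (fl L (n + 1)).max? with _ | r2 <;> simp
  · simp

private lemma stepH_none {n : ℕ} {L : ℕ → ℕ} {a : ℕ} :
    stepH n L a = none ↔
      (fl L a).max? = none ∧ (fl L (n + 1)).max? = none := by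
  rw [stepH_def]
  rcases h1 : (fl L a).max? with _ | r1
  · rcases h2 : (fl L (n + 1)).max? with _ | r2 <;> simp
  · simp

private lemma fl_congr {L L' : ℕ → ℕ} (h : ∀ s, L s = 0 ↔ L' s = 0) (m : ℕ) :
    fl L m = fl L' m := by
  unfold fl
  apply List.filter_congr
  intro s _
  rw [decide_eq_decide]
  constructor
  · rintro ⟨h1, h2⟩; exact ⟨h1, fun hz => h2 ((h s).mpr hz)⟩
  · rintro ⟨h1, h2⟩; exact ⟨h1, fun hz => h2 ((h s).mp hz)⟩

private lemma stepH_congr {L L' : ℕ → ℕ} (h : ∀ s, L s = 0 ↔ L' s = 0)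
    (n a : ℕ) : stepH n L a = stepH n L' a := by
  rw [stepH_def, stepH_def, fl_congr h, fl_congr h]

/-- One pairing step, recording only the effect on the left column. -/
private def dec1 (n : ℕ) (L : ℕ → ℕ) (a : ℕ) : ℕ → ℕ :=
  match stepH n L a with
  | some (r, _) => Function.update L r (L r - 1)
  | none => L

private lemma runGen_cons (n : ℕ) (L : ℕ → ℕ) (a : ℕ) (rest : List ℕ) :
    (runGen (stepH n) L (a :: rest)).1 = (runGen (stepH n) (dec1 n L a) rest).1 := by
  rcases h : stepH n L a with _ | ⟨r, w⟩ <;> simp [runGen, dec1, h]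

private lemma stepH_row {n : ℕ} {L : ℕ → ℕ} {a r : ℕ} {w : Bool}
    (h : stepH n L a = some (r, w)) : 1 ≤ r ∧ L r ≠ 0 := by
  cases w
  · rw [stepH_some_false] at h
    rw [fl_max_some] at h
    exact ⟨h.1.2.1, h.1.2.2⟩
  · rw [stepH_some_true] at h
    rw [fl_max_none, fl_max_some] at h
    exact ⟨h.2.1.2.1, h.2.1.2.2⟩

/-- If the pairing for `b` picks row `r`, then decrementing a *different* row
does not change its pick. -/
private lemma stepH_update {n : ℕ} {L : ℕ → ℕ} {b r r' v : ℕ} {w : Bool}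
    (h : stepH n L b = some (r, w)) (hne : r' ≠ r) (hv : v ≠ 0 → L r' ≠ 0) :
    stepH n (Function.update L r' v) b = some (r, w) := by
  have hup : ∀ s, Function.update L r' v s ≠ 0 → L s ≠ 0 := by
    intro s hs
    by_cases hsr : s = r'
    · subst hsr
      rw [Function.update_self] at hs
      exact hv hs
    · rwa [Function.update_of_ne hsr] at hs
  have hLr : Function.update L r' v r = L r := Function.update_of_ne (fun h => hne h.symm) _ _
  cases w
  · rw [stepH_some_false] at h ⊢
    rw [fl_max_some] at h ⊢
    obtain ⟨⟨h1, h2, h3⟩, h4⟩ := h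
    refine ⟨⟨h1, h2, by rw [hLr]; exact h3⟩, fun s hs h1s h2s => h4 s hs h1s (hup s h2s)⟩
  · rw [stepH_some_true] at h ⊢
    obtain ⟨h0, h⟩ := h
    rw [fl_max_none] at h0
    rw [fl_max_some] at h
    obtain ⟨⟨h1, h2, h3⟩, h4⟩ := h
    constructor
    · rw [fl_max_none]
      intro s hs h1s
      by_contra hz
      exact (hup s hz) (h0 s hs h1s)
    · rw [fl_max_some]
      exact ⟨⟨h1, h2, by rw [hLr]; exact h3⟩, fun s hs h1s h2s => h4 s hs h1s (hup s h2s)⟩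

/-- Key diamond lemma in the hard case: both `a` and `b` pick the same row `r`,
and that row becomes unavailable.  Then `a` and `b` pick the same row afterwards. -/
private lemma pick_zero {n : ℕ} {L : ℕ → ℕ} {a b r : ℕ} {wa wb : Bool}
    (hb : b ≤ n + 1) (hab : a ≤ b)
    (h1 : stepH n L a = some (r, wa)) (h2 : stepH n L b = some (r, wb)) :
    (stepH n (Function.update L r 0) a).map Prod.fst
      = (stepH n (Function.update L r 0) b).map Prod.fst := by
  set L' := Function.update L r 0 with hL'
  have hL'r : L' r = 0 := Function.update_self _ _ _
  have hL'ne : ∀ s, L' s ≠ 0 → L s ≠ 0 ∧ s ≠ r := by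
    intro s hs
    by_cases hsr : s = r
    · subst hsr; exact absurd hL'r hs
    · rw [hL', Function.update_of_ne hsr] at hs; exact ⟨hs, hsr⟩
  cases wa
  · -- a unwinds to r, hence r < a ≤ b and b unwinds to r as well
    rw [stepH_some_false, fl_max_some] at h1
    obtain ⟨⟨hra, hr1, hrL⟩, hmaxa⟩ := h1
    have hwb : wb = false := by
      cases wb
      · rfl
      · rw [stepH_some_true, fl_max_none] at h2
        exact absurd (h2.1 r (lt_of_lt_of_le hra hab) hr1) hrL
    subst hwb
    rw [stepH_some_false, fl_max_some] at h2
    obtain ⟨⟨hrb, _, _⟩, hmaxb⟩ := h2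
    have key : ∀ s, s < b → 1 ≤ s → L' s ≠ 0 → s < r := by
      intro s hs h1s hLs
      obtain ⟨hLs0, hsr⟩ := hL'ne s hLs
      exact lt_of_le_of_ne (hmaxb s hs h1s hLs0) hsr
    rcases hB : (fl L' b).max? with _ | t
    · have hBn := fl_max_none.mp hB
      have hA : (fl L' a).max? = none := by
        rw [fl_max_none]
        exact fun s hs h1s => hBn s (lt_of_lt_of_le hs hab) h1s
      rw [stepH_def, stepH_def, hA, hB]
    · rw [fl_max_some] at hB
      obtain ⟨⟨htb, ht1, htL⟩, hmaxt⟩ := hB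
      have htr : t < r := key t htb ht1 htL
      have hA : (fl L' a).max? = some t := by
        rw [fl_max_some]
        exact ⟨⟨lt_trans htr hra, ht1, htL⟩,
          fun s hs h1s hLs => hmaxt s (lt_of_lt_of_le hs hab) h1s hLs⟩
      have hB' : (fl L' b).max? = some t := by
        rw [fl_max_some]; exact ⟨⟨htb, ht1, htL⟩, hmaxt⟩
      rw [stepH_def, stepH_def, hA, hB']
  · -- a winds to r : no available rows strictly above a, r is the global max
    rw [stepH_some_true, fl_max_none] at h1
    obtain ⟨h1a, h1g⟩ := h1
    rw [fl_max_some] at h1g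
    obtain ⟨⟨hrn, hr1, hrL⟩, hmaxg⟩ := h1g
    have hA : (fl L' a).max? = none := by
      rw [fl_max_none]
      intro s hs h1s
      by_contra hz
      exact (hL'ne s hz).1 (h1a s hs h1s)
    cases wb
    · -- b unwinds to r ; afterwards the two picks coincide
      rw [stepH_some_false, fl_max_some] at h2
      obtain ⟨⟨hrb, _, _⟩, hmaxb⟩ := h2
      have key : ∀ s, s < n + 1 → 1 ≤ s → L' s ≠ 0 → s < r := by
        intro s hs h1s hLs
        obtain ⟨hLs0, hsr⟩ := hL'ne s hLs
        exact lt_of_le_of_ne (hmaxg s hs h1s hLs0) hsr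
      rcases hW : (fl L' (n + 1)).max? with _ | t
      · have hWn := fl_max_none.mp hW
        have hB : (fl L' b).max? = none := by
          rw [fl_max_none]
          exact fun s hs h1s => hWn s (lt_of_lt_of_le hs hb) h1s
        rw [stepH_def, stepH_def, hA, hB, hW]
      · rw [fl_max_some] at hW
        obtain ⟨⟨htn, ht1, htL⟩, hmaxt⟩ := hW
        have htr : t < r := key t htn ht1 htL
        have hB : (fl L' b).max? = some t := by
          rw [fl_max_some]
          refine ⟨⟨lt_trans htr hrb, ht1, htL⟩,
            fun s hs h1s hLs => hmaxt s (lt_of_lt_of_le hs hb) h1s hLs⟩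
        have hW' : (fl L' (n + 1)).max? = some t := by
          rw [fl_max_some]; exact ⟨⟨htn, ht1, htL⟩, hmaxt⟩
        rw [stepH_def, stepH_def, hA, hB, hW']
        rfl
    · -- b winds as well : both picks are the global max afterwards
      rw [stepH_some_true, fl_max_none] at h2
      obtain ⟨h2b, _⟩ := h2
      have hB : (fl L' b).max? = none := by
        rw [fl_max_none]
        intro s hs h1s
        by_contra hz
        exact (hL'ne s hz).1 (h2b s hs h1s)
      rw [stepH_def, stepH_def, hA, hB]

/-- The diamond (swap) lemma: processing two right dots in either order removes the
same multiset of left dots. -/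
private lemma pick_zero' {n : ℕ} {L : ℕ → ℕ} {a b r : ℕ} {wa wb : Bool}
    (ha : a ≤ n + 1) (hb : b ≤ n + 1)
    (h1 : stepH n L a = some (r, wa)) (h2 : stepH n L b = some (r, wb)) :
    (stepH n (Function.update L r 0) a).map Prod.fst
      = (stepH n (Function.update L r 0) b).map Prod.fst := by
  rcases le_total a b with hab | hab
  · exact pick_zero hb hab h1 h2
  · exact (pick_zero ha hab h2 h1).symm

private lemma dec1_swap (n : ℕ) {a b : ℕ} (ha : a ≤ n + 1) (hb : b ≤ n + 1)
    (L : ℕ → ℕ) : dec1 n (dec1 n L a) b = dec1 n (dec1 n L b) a := by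
  rcases hA : stepH n L a with _ | ⟨ra, wa⟩
  · -- a finds nothing : nothing is available at all, so neither does b
    have hB : stepH n L b = none := by
      rw [stepH_none] at hA ⊢
      obtain ⟨_, hA2⟩ := hA
      have h2 := fl_max_none.mp hA2
      refine ⟨?_, hA2⟩
      rw [fl_max_none]
      exact fun s hs h1s => h2 s (lt_of_lt_of_le hs hb) h1s
    have e1 : dec1 n L a = L := by rw [dec1, hA]
    have e2 : dec1 n L b = L := by rw [dec1, hB]
    rw [e1, e2, e1]
  · rcases hB : stepH n L b with _ | ⟨rb, wb⟩
    · have hA' : stepH n L a = none := by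
        rw [stepH_none] at hB ⊢
        obtain ⟨_, hB2⟩ := hB
        have h2 := fl_max_none.mp hB2
        refine ⟨?_, hB2⟩
        rw [fl_max_none]
        exact fun s hs h1s => h2 s (lt_of_lt_of_le hs ha) h1s
      rw [hA] at hA'; exact absurd hA' (by simp)
    · have e1 : dec1 n L a = Function.update L ra (L ra - 1) := by rw [dec1, hA]
      have e2 : dec1 n L b = Function.update L rb (L rb - 1) := by rw [dec1, hB]
      by_cases hrr : ra = rb
      · -- same row picked
        subst hrr
        obtain ⟨hra1, hraL⟩ := stepH_row hA
        by_cases hone : L ra = 1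
        · -- the row gets exhausted
          have e0 : L ra - 1 = 0 := by omega
          rw [e0] at e1 e2
          rw [e1, e2]
          set L' := Function.update L ra 0 with hL'
          have hpz := pick_zero' ha hb hA hB
          rcases hC : stepH n L' a with _ | ⟨sa, va⟩ <;>
            rcases hD : stepH n L' b with _ | ⟨sb, vb⟩
          · rw [dec1, dec1, hC, hD]
          · rw [hC, hD] at hpz; simp at hpz
          · rw [hC, hD] at hpz; simp at hpz
          · rw [hC, hD] at hpz; simp at hpz
            subst hpz
            rw [dec1, dec1, hC, hD]
        · -- the row stays available : availability unchanged
          have hcongr : ∀ s, L s = 0 ↔ Function.update L ra (L ra - 1) s = 0 := by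
            intro s
            by_cases hsr : s = ra
            · subst hsr
              rw [Function.update_self]
              omega
            · rw [Function.update_of_ne hsr]
          have hC : stepH n (Function.update L ra (L ra - 1)) b = some (ra, wb) := by
            rw [← stepH_congr hcongr n b]; exact hB
          have hD : stepH n (Function.update L ra (L ra - 1)) a = some (ra, wa) := by
            rw [← stepH_congr hcongr n a]; exact hA
          have eC : dec1 n (Function.update L ra (L ra - 1)) b
              = Function.update (Function.update L ra (L ra - 1)) ra
                  (Function.update L ra (L ra - 1) ra - 1) := by rw [dec1, hC]
          have eD : dec1 n (Function.update L ra (L ra - 1)) a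
              = Function.update (Function.update L ra (L ra - 1)) ra
                  (Function.update L ra (L ra - 1) ra - 1) := by rw [dec1, hD]
          rw [e1, e2, eC, eD]
      · -- distinct rows : each step leaves the other's pick unchanged
        have hva : L ra - 1 ≠ 0 → L ra ≠ 0 := by omega
        have hvb : L rb - 1 ≠ 0 → L rb ≠ 0 := by omega
        have hC : stepH n (Function.update L ra (L ra - 1)) b = some (rb, wb) :=
          stepH_update hB hrr hva
        have hD : stepH n (Function.update L rb (L rb - 1)) a = some (ra, wa) :=
          stepH_update hA (fun h => hrr h.symm) hvb
        have eC : dec1 n (Function.update L ra (L ra - 1)) b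
            = Function.update (Function.update L ra (L ra - 1)) rb
                (Function.update L ra (L ra - 1) rb - 1) := by rw [dec1, hC]
        have eD : dec1 n (Function.update L rb (L rb - 1)) a
            = Function.update (Function.update L rb (L rb - 1)) ra
                (Function.update L rb (L rb - 1) ra - 1) := by rw [dec1, hD]
        have g1 : Function.update L ra (L ra - 1) rb = L rb :=
          Function.update_of_ne (fun h => hrr h.symm) _ _
        have g2 : Function.update L rb (L rb - 1) ra = L ra :=
          Function.update_of_ne hrr _ _
        rw [e1, e2, eC, eD, g1, g2]
        exact Function.update_comm hrr _ _ _

private lemma runGen_fst_perm (n : ℕ) {o o' : List ℕ} (hp : o.Perm o')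
    (hmem : ∀ x ∈ o, x ≤ n + 1) :
    ∀ L, (runGen (stepH n) L o).1 = (runGen (stepH n) L o').1 := by
  induction hp with
  | nil => intro L; rfl
  | cons x p ih =>
    intro L
    rw [runGen_cons, runGen_cons]
    exact ih (fun y hy => hmem y (List.mem_cons_of_mem _ hy)) _
  | swap x y l =>
    intro L
    rw [runGen_cons, runGen_cons, runGen_cons, runGen_cons,
      dec1_swap n (hmem y (by simp)) (hmem x (by simp))]
  | trans p1 p2 ih1 ih2 =>
    intro L
    exact (ih1 hmem L).trans (ih2 (fun y hy => hmem y (p1.mem_iff.mpr hy)) L)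

private lemma mem_rOrder_le {n : ℕ} {b : ℕ → ℕ} {x : ℕ} (hx : x ∈ rOrder n b) :
    x ≤ n + 1 := by
  rw [rOrder, List.mem_flatMap] at hx
  obtain ⟨i, hi, hx⟩ := hx
  rw [List.mem_range] at hi
  rw [List.eq_of_mem_replicate hx]
  omega

/-- **Order-independence of the H-line pairing: the isomorphism `ι`.**
For `b_1 ∈ B_{(k)}`, `b_2 ∈ B_{(l)}` with `k ≥ l`, the set of left-column dots used as
endpoints of H-lines (equivalently, the multiset of unpaired left dots), and hence the
element `ι(b_1 ⊗ b_2) ∈ B_{(l)} ⊗ B_{(k)}`, does not depend on the order in which the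
right-column dots are processed. -/
theorem iota_order_independent
    (n k l : ℕ) (hn : 2 ≤ n) (hkl : l ≤ k) (hl : 1 ≤ l)
    (b1 b2 : ℕ → ℕ) (hb1 : isCrys n k b1) (hb2 : isCrys n l b2)
    (o o' : List ℕ) (ho : o.Perm (rOrder n b2)) (ho' : o'.Perm (rOrder n b2)) :
    (runGen (stepH n) b1 o).1 = (runGen (stepH n) b1 o').1 ∧
    ((fun r => b1 r - (runGen (stepH n) b1 o).1 r, fun r => b2 r + (runGen (stepH n) b1 o).1 r)
      = (fun r => b1 r - (runGen (stepH n) b1 o').1 r,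
         fun r => b2 r + (runGen (stepH n) b1 o').1 r)) := by
  have key : (runGen (stepH n) b1 o).1 = (runGen (stepH n) b1 o').1 :=
    runGen_fst_perm n (ho.trans ho'.symm)
      (fun x hx => mem_rOrder_le (ho.mem_iff.mp hx)) b1
  exact ⟨key, by rw [key]⟩

end HKKOTY
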